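/- Let (x_1,...,x_n) be a median order of a tournament T, and let i < j be indices such that x_i and x_j lie in a common module I of T while x_{i+1},...,x_{j-1} all lie outside I. Then (x_1,...,x_{i-1}, x_{i+1},...,x_{j-1}, x_i, x_j, x_{j+1},...,x_n) is also a median order of T. -/

import Mathlib

variable {V : Type*}

/-- An oriented graph: no loops or 2-cycles (asymmetric relation). -/
def Oriented (E : V → V → Prop) : Prop := ∀ u v : V, E u v → ¬ E v u

/-- A tournament: oriented and any two distinct vertices are joined by an arc. -/
def Tournament (E : V → V → Prop) : Prop :=
  Oriented E ∧ ∀ u v : V, u ≠ v → E u v ∨ E v u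

def outN (E : V → V → Prop) (v : V) : Set V := {u | E v u}

def inN (E : V → V → Prop) (v : V) : Set V := {u | E u v}

/-- The second out-neighborhood: vertices at directed distance exactly 2. -/
def secondN (E : V → V → Prop) (v : V) : Set V :=
  {u | ¬ E v u ∧ u ≠ v ∧ ∃ w, E v w ∧ E w u}

/-- `u` and `v` are distinct non-adjacent vertices (a missing edge). -/
def NonAdj (E : V → V → Prop) (u v : V) : Prop := u ≠ v ∧ ¬ E u v ∧ ¬ E v u

/-- The missing edges form a matching: every vertex has at most one non-neighbor. -/
def MissingMatching (E : V → V → Prop) : Prop :=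
  ∀ u v w : V, NonAdj E u v → NonAdj E u w → v = w

/-- A special arc `x ↠ y`: an arc such that `x` is not in the second
out-neighborhood of `y`. -/
def SpecialArc (E : V → V → Prop) (x y : V) : Prop :=
  E x y ∧ ¬ ∃ u, E y u ∧ E u x

/-- Number of forward arcs of an ordering (list) of the vertices. -/
noncomputable def fwd (E : V → V → Prop) (L : List V) : ℕ :=
  Set.ncard {p : ℕ × ℕ | p.1 < p.2 ∧ ∃ (h1 : p.1 < L.length) (h2 : p.2 < L.length),
    E (L.get ⟨p.1, h1⟩) (L.get ⟨p.2, h2⟩)}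

/-- A median order: an enumeration of all vertices maximizing the number of
forward arcs. -/
def MedianOrder (E : V → V → Prop) (L : List V) : Prop :=
  L.Nodup ∧ (∀ v : V, v ∈ L) ∧
    ∀ M : List V, M.Nodup → (∀ v : V, v ∈ M) → fwd E M ≤ fwd E L

/-- A module: any two vertices inside have the same in- and out-neighborhoods
outside. -/
def IsModule (E : V → V → Prop) (I : Set V) : Prop :=
  ∀ u ∈ I, ∀ v ∈ I, ∀ w, w ∉ I → (E u w ↔ E v w) ∧ (E w u ↔ E w v)

/-- 2-degeneracy of the underlying undirected graph. -/
def TwoDegenerate (E : V → V → Prop) : Prop :=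
  ∀ S : Set V, S.Nonempty → ∃ v ∈ S, Set.ncard {u | u ∈ S ∧ u ≠ v ∧ (E u v ∨ E v u)} ≤ 2

/-- The relation `(a,b) R (c,d)`: the 4-cycle `a → c ↠ b → d ↠ a`. -/
def Rrel (E : V → V → Prop) (a b c d : V) : Prop :=
  E a c ∧ SpecialArc E c b ∧ E b d ∧ SpecialArc E d a

section Helpers

variable {V : Type*}

noncomputable def cnt (P : V → Prop) (T : List V) : ℕ :=
  Set.ncard {l : ℕ | ∃ h : l < T.length, P (T.get ⟨l, h⟩)}

lemma cnt_finite (P : V → Prop) (T : List V) :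
    {l : ℕ | ∃ h : l < T.length, P (T.get ⟨l, h⟩)}.Finite :=
  (Set.finite_Iio T.length).subset (fun l hl => by obtain ⟨h, _⟩ := hl; exact h)

lemma cnt_nil (P : V → Prop) : cnt P ([] : List V) = 0 := by
  simp [cnt]

open Classical in
lemma cnt_cons (P : V → Prop) (a : V) (T : List V) :
    cnt P (a :: T) = (if P a then 1 else 0) + cnt P T := by
  have hset : {l : ℕ | ∃ h : l < (a :: T).length, P ((a :: T).get ⟨l, h⟩)} =
      (if P a then {0} else (∅ : Set ℕ)) ∪
        (Nat.succ '' {l : ℕ | ∃ h : l < T.length, P (T.get ⟨l, h⟩)}) := by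
    ext l
    cases l with
    | zero =>
      by_cases hPa : P a <;>
        simp [hPa, Nat.succ_ne_zero, List.get]
    | succ k =>
      by_cases hPa : P a <;>
        simp [hPa, Nat.succ_lt_succ_iff, List.get]
  have hdis : Disjoint (if P a then ({0} : Set ℕ) else ∅)
      (Nat.succ '' {l : ℕ | ∃ h : l < T.length, P (T.get ⟨l, h⟩)}) := by
    by_cases hPa : P a <;> simp [hPa, Set.disjoint_left]
  have hf1 : (if P a then ({0} : Set ℕ) else ∅).Finite := by
    by_cases hPa : P a <;> simp [hPa]
  rw [cnt, hset, Set.ncard_union_eq hdis hf1 ((cnt_finite P T).image _),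
    Set.ncard_image_of_injective _ Nat.succ_injective]
  by_cases hPa : P a <;> simp [hPa, cnt]

lemma cnt_append (P : V → Prop) (A B : List V) :
    cnt P (A ++ B) = cnt P A + cnt P B := by
  induction A with
  | nil => simp [cnt_nil]
  | cons a A ih => simp only [List.cons_append, cnt_cons, ih]; omega

lemma cnt_congr (P Q : V → Prop) (T : List V)
    (h : ∀ v ∈ T, (P v ↔ Q v)) : cnt P T = cnt Q T := by
  unfold cnt
  congr 1
  ext l
  constructor
  · rintro ⟨hl, hp⟩; exact ⟨hl, (h _ (T.get_mem _)).mp hp⟩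
  · rintro ⟨hl, hp⟩; exact ⟨hl, (h _ (T.get_mem _)).mpr hp⟩

end Helpers

section Helpers2

variable {V : Type*}

lemma fwd_finite (E : V → V → Prop) (L : List V) :
    {p : ℕ × ℕ | p.1 < p.2 ∧ ∃ (h1 : p.1 < L.length) (h2 : p.2 < L.length),
      E (L.get ⟨p.1, h1⟩) (L.get ⟨p.2, h2⟩)}.Finite := by
  apply ((Set.finite_Iio L.length).prod (Set.finite_Iio L.length)).subset
  rintro ⟨p1, p2⟩ ⟨-, h1, h2, -⟩
  exact ⟨h1, h2⟩

lemma fwd_cons (E : V → V → Prop) (a : V) (T : List V) :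
    fwd E (a :: T) = cnt (fun v => E a v) T + fwd E T := by
  have hset : {p : ℕ × ℕ | p.1 < p.2 ∧ ∃ (h1 : p.1 < (a :: T).length)
        (h2 : p.2 < (a :: T).length),
        E ((a :: T).get ⟨p.1, h1⟩) ((a :: T).get ⟨p.2, h2⟩)} =
      ((fun l => ((0 : ℕ), l + 1)) '' {l : ℕ | ∃ h : l < T.length, E a (T.get ⟨l, h⟩)}) ∪
        ((fun p : ℕ × ℕ => (p.1 + 1, p.2 + 1)) ''
          {p : ℕ × ℕ | p.1 < p.2 ∧ ∃ (h1 : p.1 < T.length) (h2 : p.2 < T.length),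
            E (T.get ⟨p.1, h1⟩) (T.get ⟨p.2, h2⟩)}) := by
    ext ⟨p1, p2⟩
    constructor
    · rintro ⟨hlt, h1, h2, hE⟩
      cases p2 with
      | zero => omega
      | succ q =>
        cases p1 with
        | zero =>
          left
          exact ⟨q, ⟨Nat.succ_lt_succ_iff.mp h2, hE⟩, rfl⟩
        | succ k =>
          right
          refine ⟨(k, q), ⟨Nat.succ_lt_succ_iff.mp hlt,
            Nat.succ_lt_succ_iff.mp h1, Nat.succ_lt_succ_iff.mp h2, hE⟩, rfl⟩
    · rintro (⟨l, ⟨hl, hE⟩, heq⟩ | ⟨⟨k, q⟩, ⟨hlt, h1, h2, hE⟩, heq⟩)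
      · cases heq
        exact ⟨Nat.succ_pos l, Nat.succ_pos T.length, Nat.succ_lt_succ hl, hE⟩
      · cases heq
        exact ⟨Nat.succ_lt_succ hlt, Nat.succ_lt_succ h1, Nat.succ_lt_succ h2, hE⟩
  have hinj1 : Function.Injective (fun l : ℕ => ((0 : ℕ), l + 1)) := by
    intro x y h; simpa using h
  have hinj2 : Function.Injective (fun p : ℕ × ℕ => (p.1 + 1, p.2 + 1)) := by
    rintro ⟨a1, a2⟩ ⟨b1, b2⟩ h
    simp only [Prod.mk.injEq] at h
    exact Prod.ext (by omega) (by omega)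
  have hdis : Disjoint ((fun l => ((0 : ℕ), l + 1)) ''
        {l : ℕ | ∃ h : l < T.length, E a (T.get ⟨l, h⟩)})
      ((fun p : ℕ × ℕ => (p.1 + 1, p.2 + 1)) ''
        {p : ℕ × ℕ | p.1 < p.2 ∧ ∃ (h1 : p.1 < T.length) (h2 : p.2 < T.length),
          E (T.get ⟨p.1, h1⟩) (T.get ⟨p.2, h2⟩)}) := by
    rw [Set.disjoint_left]
    rintro ⟨p1, p2⟩ ⟨l, -, heq1⟩ ⟨⟨k, q⟩, -, heq2⟩
    simp only [Prod.mk.injEq] at heq1 heq2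
    omega
  rw [fwd, hset, Set.ncard_union_eq hdis ((cnt_finite _ T).image _)
      ((fwd_finite E T).image _),
    Set.ncard_image_of_injective _ hinj1, Set.ncard_image_of_injective _ hinj2]
  rfl

lemma fwd_insert (E : V → V → Prop) (x : V) (A B : List V) :
    fwd E (A ++ x :: B) = fwd E (A ++ B) + cnt (fun u => E u x) A
      + cnt (fun v => E x v) B := by
  induction A with
  | nil => simp [fwd_cons, cnt_nil]; omega
  | cons a A ih =>
    simp only [List.cons_append, fwd_cons, cnt_append, cnt_cons, ih]
    omega

end Helpers2

theorem stmt17 [Fintype V] (E : V → V → Prop) (hT : Tournament E)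
    (L : List V) (hL : MedianOrder E L) (I : Set V) (hI : IsModule E I)
    {i j : ℕ} (hi : i < L.length) (hj : j < L.length) (hij : i < j)
    (hxi : L.get ⟨i, hi⟩ ∈ I) (hxj : L.get ⟨j, hj⟩ ∈ I)
    (hbetween : ∀ l (hl : l < L.length), i < l → l < j → L.get ⟨l, hl⟩ ∉ I) :
    MedianOrder E (L.take i ++ (L.drop (i + 1)).take (j - i - 1)
      ++ [L.get ⟨i, hi⟩] ++ L.drop j) := by
  classical
  obtain ⟨hnd, hmem, hmax⟩ := hL
  set x := L.get ⟨i, hi⟩ with hx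
  set y := L.get ⟨j, hj⟩ with hy
  set A := L.take i with hA
  set B := (L.drop (i + 1)).take (j - i - 1) with hB
  set C := L.drop j with hC
  set C₂ := L.drop (j + 1) with hC₂
  have hdropi : L.drop i = x :: L.drop (i + 1) := List.drop_eq_getElem_cons hi
  have hBC : B ++ C = L.drop (i + 1) := by
    have h := List.take_append_drop (j - i - 1) (L.drop (i + 1))
    rwa [List.drop_drop, (by omega : i + 1 + (j - i - 1) = j)] at h
  have hL1 : L = A ++ x :: (B ++ C) := by
    conv_lhs => rw [← List.take_append_drop i L, hdropi, ← hBC]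
  have hCy : C = y :: C₂ := List.drop_eq_getElem_cons hj
  have hL2 : L = (A ++ x :: B) ++ y :: C₂ := by
    rw [hL1, hCy]; simp
  -- every element of B is outside I
  have hBnotI : ∀ w ∈ B, w ∉ I := by
    intro w hw
    obtain ⟨⟨k, hk⟩, rfl⟩ := List.mem_iff_get.mp hw
    have hk' : k < j - i - 1 := by
      have hlen : B.length = min (j - i - 1) (L.length - (i + 1)) := by
        rw [hB, List.length_take, List.length_drop]
      omega
    have hkL : i + 1 + k < L.length := by omega
    have hget : B.get ⟨k, hk⟩ = L.get ⟨i + 1 + k, hkL⟩ := by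
      simp [hB, List.get_eq_getElem, List.getElem_take, List.getElem_drop]
    rw [hget]
    exact hbetween (i + 1 + k) hkL (by omega) (by omega)
  have hmod : ∀ w ∈ B, (E x w ↔ E y w) ∧ (E w x ↔ E w y) :=
    fun w hw => hI x hxi y hxj w (hBnotI w hw)
  have hce1 : cnt (fun v => E x v) B = cnt (fun v => E y v) B :=
    cnt_congr _ _ _ (fun w hw => (hmod w hw).1)
  have hce2 : cnt (fun u => E u x) B = cnt (fun u => E u y) B :=
    cnt_congr _ _ _ (fun w hw => (hmod w hw).2)
  -- permutations
  have heM : A ++ B ++ [x] ++ C = (A ++ B) ++ x :: C := by simp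
  have hpermM : (A ++ B ++ [x] ++ C).Perm L := by
    rw [heM, hL1]
    refine List.perm_middle.trans (.symm ?_)
    have h1 : (A ++ x :: (B ++ C)).Perm (x :: (A ++ (B ++ C))) := List.perm_middle
    simpa [List.append_assoc] using h1
  have hpermM' : ((A ++ [x]) ++ y :: (B ++ C₂)).Perm L := by
    rw [hL2]
    have h1 : ((A ++ [x]) ++ y :: (B ++ C₂)).Perm (y :: ((A ++ [x]) ++ (B ++ C₂))) :=
      List.perm_middle
    have h2 : ((A ++ x :: B) ++ y :: C₂).Perm (y :: ((A ++ x :: B) ++ C₂)) :=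
      List.perm_middle
    have h3 : (A ++ [x]) ++ (B ++ C₂) = (A ++ x :: B) ++ C₂ := by simp
    rw [h3] at h1
    exact h1.trans h2.symm
  -- fwd computations
  have e1 : fwd E L = fwd E (A ++ (B ++ C)) + cnt (fun u => E u x) A
      + cnt (fun v => E x v) (B ++ C) := by
    conv_lhs => rw [hL1]
    exact fwd_insert E x A (B ++ C)
  have e2 : fwd E (A ++ B ++ [x] ++ C) = fwd E ((A ++ B) ++ C)
      + cnt (fun u => E u x) (A ++ B) + cnt (fun v => E x v) C := by
    rw [heM]; exact fwd_insert E x (A ++ B) C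
  have eassoc : fwd E ((A ++ B) ++ C) = fwd E (A ++ (B ++ C)) := by
    rw [List.append_assoc]
  have e3 : fwd E L = fwd E ((A ++ x :: B) ++ C₂)
      + cnt (fun u => E u y) (A ++ x :: B) + cnt (fun v => E y v) C₂ := by
    conv_lhs => rw [hL2]
    exact fwd_insert E y (A ++ x :: B) C₂
  have e4 : fwd E ((A ++ [x]) ++ y :: (B ++ C₂)) = fwd E ((A ++ [x]) ++ (B ++ C₂))
      + cnt (fun u => E u y) (A ++ [x]) + cnt (fun v => E y v) (B ++ C₂) :=
    fwd_insert E y (A ++ [x]) (B ++ C₂)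
  have eassoc2 : fwd E ((A ++ [x]) ++ (B ++ C₂)) = fwd E ((A ++ x :: B) ++ C₂) := by
    rw [(by simp : (A ++ [x]) ++ (B ++ C₂) = (A ++ x :: B) ++ C₂)]
  -- median bounds
  have hM_le : fwd E (A ++ B ++ [x] ++ C) ≤ fwd E L :=
    hmax _ (hpermM.nodup_iff.mpr hnd) (fun v => hpermM.mem_iff.mpr (hmem v))
  have hM'_le : fwd E ((A ++ [x]) ++ y :: (B ++ C₂)) ≤ fwd E L :=
    hmax _ (hpermM'.nodup_iff.mpr hnd) (fun v => hpermM'.mem_iff.mpr (hmem v))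
  -- expand the counts
  rw [cnt_append] at e1 e2
  rw [cnt_append, cnt_cons] at e3
  rw [cnt_append, cnt_append, cnt_cons, cnt_nil] at e4
  rw [eassoc] at e2
  rw [eassoc2] at e4
  rw [e2, e1] at hM_le
  rw [e4, e3, ← hce1, ← hce2] at hM'_le
  have hkey : fwd E (A ++ B ++ [x] ++ C) = fwd E L := by omega
  refine ⟨hpermM.nodup_iff.mpr hnd, fun v => hpermM.mem_iff.mpr (hmem v), ?_⟩
  intro N hN1 hN2
  rw [hkey]
  exact hmax N hN1 hN2
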